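/- Let r, q, n be positive integers with q dividing r and gcd(q,n) ≤ 2, and let G = G(r,q,n) be the corresponding complex reflection group. Assuming the Bump–Ginzburg–Caselli identity Σ_{χ∈Irr(G)} χ(g) = |{π ∈ G : π·π̄ = g}| for all g ∈ G, the character table sum of G is at least the character degree sum, with equality if and only if G is abelian. -/

import Mathlib

open CategoryTheory
open scoped ComplexOrder

/-- The color shift `(i,k) ↦ (i,k+1)` on `Fin n × ZMod r`. -/
def shiftPerm (r n : ℕ) : Equiv.Perm (Fin n × ZMod r) :=
  Equiv.prodCongr (Equiv.refl (Fin n)) (Equiv.addLeft (1 : ZMod r))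

/-- The generalized symmetric group `G(r,1,n) = ℤ_r ≀ S_n`, realized as the
subgroup of permutations of `Fin n × ZMod r` commuting with the color shift. -/
def genSym (r n : ℕ) : Subgroup (Equiv.Perm (Fin n × ZMod r)) :=
  Subgroup.centralizer {shiftPerm r n}

/-- Color negation `(i,k) ↦ (i,-k)`. -/
def etaPerm (r n : ℕ) : Equiv.Perm (Fin n × ZMod r) :=
  Equiv.prodCongr (Equiv.refl (Fin n)) (Equiv.neg (ZMod r))

/-- The bar operation `(z;σ)‾ = (−z;σ)`, i.e. conjugation by color negation;
`π * barPerm r n π` is the absolute square of `π`. -/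
def barPerm (r n : ℕ) (π : Equiv.Perm (Fin n × ZMod r)) :
    Equiv.Perm (Fin n × ZMod r) :=
  etaPerm r n * π * etaPerm r n

/-- `S` is the (finite) set of irreducible complex characters of `G`. -/
def IsIrrFamily (G : Type) [Group G] (S : Finset (G → ℂ)) : Prop :=
  (∀ f ∈ S, ∃ V : FDRep ℂ G, Simple V ∧ V.character = f) ∧
  ∀ V : FDRep ℂ G, Simple V → V.character ∈ S

/-- The character table sum. -/
noncomputable def tableSum (G : Type) [Group G] (S : Finset (G → ℂ)) : ℂ :=
  ∑ f ∈ S, ∑ᶠ C : ConjClasses G, f (Quotient.out C)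

/-- The character degree sum. -/
noncomputable def degreeSum (G : Type) [Group G] (S : Finset (G → ℂ)) : ℂ :=
  ∑ f ∈ S, f 1


-- aux lemmas
lemma shiftPerm_apply (r n : ℕ) (x : Fin n × ZMod r) : shiftPerm r n x = (x.1, 1 + x.2) := rfl

lemma etaPerm_apply (r n : ℕ) (x : Fin n × ZMod r) : etaPerm r n x = (x.1, -x.2) := rfl

lemma genSym_apply {r n : ℕ} [NeZero r] {π : Equiv.Perm (Fin n × ZMod r)}
    (hπ : π ∈ genSym r n) (i : Fin n) (k : ZMod r) :
    π (i, k) = ((π (i, 0)).1, (π (i, 0)).2 + k) := by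
  have hc : shiftPerm r n * π = π * shiftPerm r n :=
    (Subgroup.mem_centralizer_iff.mp hπ) _ (Set.mem_singleton _)
  have step : ∀ (j : Fin n) (m : ZMod r),
      π (j, 1 + m) = ((π (j, m)).1, 1 + (π (j, m)).2) := by
    intro j m
    have := DFunLike.congr_fun hc (j, m)
    simp only [Equiv.Perm.mul_apply, shiftPerm_apply] at this
    exact this.symm
  have key : ∀ m : ℕ, π (i, (m : ZMod r)) = ((π (i, 0)).1, (π (i, 0)).2 + m) := by
    intro m
    induction m with
    | zero => simp
    | succ m ih =>
      have h1 : ((m + 1 : ℕ) : ZMod r) = 1 + (m : ZMod r) := by push_cast; ring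
      rw [h1, step i ((m : ZMod r)), ih]
      push_cast
      refine Prod.ext_iff.mpr ⟨rfl, ?_⟩
      ring
  obtain ⟨m, rfl⟩ := ZMod.natCast_zmod_surjective (n := r) k
  exact key m

lemma barPerm_apply {r n : ℕ} [NeZero r] {π : Equiv.Perm (Fin n × ZMod r)}
    (hπ : π ∈ genSym r n) (i : Fin n) (k : ZMod r) :
    barPerm r n π (i, k) = ((π (i, 0)).1, k - (π (i, 0)).2) := by
  show (etaPerm r n) ((π) ((etaPerm r n) (i, k))) = _
  rw [etaPerm_apply, genSym_apply hπ, etaPerm_apply]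
  refine Prod.ext_iff.mpr ⟨rfl, ?_⟩
  show -((π (i,0)).2 + -k) = k - (π (i,0)).2
  ring

lemma barPerm_mem_genSym {r n : ℕ} [NeZero r] {π : Equiv.Perm (Fin n × ZMod r)}
    (hπ : π ∈ genSym r n) : barPerm r n π ∈ genSym r n := by
  rw [genSym, Subgroup.mem_centralizer_iff]
  rintro g (rfl : g = shiftPerm r n)
  apply Equiv.ext
  rintro ⟨i, k⟩
  simp only [Equiv.Perm.mul_apply, shiftPerm_apply, barPerm_apply hπ]
  refine Prod.ext_iff.mpr ⟨rfl, ?_⟩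
  show 1 + (k - _) = (1 + k) - _
  ring

def tauHat (r n : ℕ) (τ : Equiv.Perm (Fin n)) : Equiv.Perm (Fin n × ZMod r) :=
  Equiv.prodCongr τ (Equiv.refl (ZMod r))

lemma tauHat_apply (r n : ℕ) (τ : Equiv.Perm (Fin n)) (x : Fin n × ZMod r) :
    tauHat r n τ x = (τ x.1, x.2) := rfl

lemma tauHat_mem_genSym (r n : ℕ) (τ : Equiv.Perm (Fin n)) : tauHat r n τ ∈ genSym r n := by
  rw [genSym, Subgroup.mem_centralizer_iff]
  rintro g (rfl : g = shiftPerm r n)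
  ext x <;> rfl

lemma fin2_surj_invol :
    ∀ F : Fin 2 → Fin 2, (∀ j, ∃ i, F i = j) → ∀ i, F (F i) = i := by decide

/-- Let `q ∣ r`, `gcd(q,n) ≤ 2`, and let `H = G(r,q,n)` be the complex
reflection group, the subgroup of `G(r,1,n)` of elements whose total color sum
vanishes mod `q`.  Assuming the Bump–Ginzburg–Caselli identity (the sum of all
irreducible character values at `g` counts absolute square roots of `g`), the
character table sum of `H` is at least the character degree sum, with equality
iff `H` is abelian. -/
theorem grqn_tableSum_ge_degreeSum (r q n : ℕ) (hr : 0 < r) (hq : 0 < q) (hn : 0 < n)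
    (hdvd : q ∣ r) (hgcd : Nat.gcd q n ≤ 2)
    (H : Subgroup (Equiv.Perm (Fin n × ZMod r)))
    (hH : ∀ P : Equiv.Perm (Fin n × ZMod r), P ∈ H ↔
      (P ∈ genSym r n ∧
        ZMod.castHom hdvd (ZMod q) (∑ i : Fin n, (P (i, (0 : ZMod r))).2) = 0))
    (S : Finset (H → ℂ)) (hS : IsIrrFamily H S)
    (hCaselli : ∀ g : H, (∑ f ∈ S, f g) =
      (Nat.card {π : Equiv.Perm (Fin n × ZMod r) //
        π ∈ H ∧ π * barPerm r n π = (g : Equiv.Perm (Fin n × ZMod r))} : ℂ)) :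
    degreeSum H S ≤ tableSum H S ∧
    (tableSum H S = degreeSum H S ↔ ∀ a b : H, a * b = b * a) := by
  classical
  haveI : NeZero r := ⟨hr.ne'⟩
  haveI : Fintype (ConjClasses ↥H) := Fintype.ofFinite _
  set N : ↥H → ℕ := fun g => Nat.card {π : Equiv.Perm (Fin n × ZMod r) //
      π ∈ H ∧ π * barPerm r n π = (g : Equiv.Perm (Fin n × ZMod r))} with hNdef
  have hNeq : ∀ g : ↥H, (∑ f ∈ S, f g) = (N g : ℂ) := hCaselli
  -- characters are class functions
  have hclass : ∀ f ∈ S, ∀ a b : ↥H, IsConj a b → f a = f b := by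
    intro f hf a b hab
    obtain ⟨V, -, rfl⟩ := hS.1 f hf
    obtain ⟨c, hc⟩ := isConj_iff.mp hab
    rw [← hc, FDRep.char_conj]
  have hNconj : ∀ a b : ↥H, IsConj a b → N a = N b := by
    intro a b hab
    have : ((N a : ℂ)) = (N b : ℂ) := by
      rw [← hNeq, ← hNeq]
      exact Finset.sum_congr rfl fun f hf => hclass f hf a b hab
    exact_mod_cast this
  -- bar membership
  have hbarmem : ∀ π : Equiv.Perm (Fin n × ZMod r), π ∈ H → barPerm r n π ∈ H := by
    intro π hπ
    obtain ⟨hg, hsum⟩ := (hH π).mp hπ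
    refine (hH _).mpr ⟨barPerm_mem_genSym hg, ?_⟩
    have : (∑ i : Fin n, ((barPerm r n π) (i, (0 : ZMod r))).2)
        = -∑ i : Fin n, (π (i, (0 : ZMod r))).2 := by
      rw [← Finset.sum_neg_distrib]
      refine Finset.sum_congr rfl fun i _ => ?_
      rw [barPerm_apply hg]
      show (0 : ZMod r) - _ = _
      ring
    rw [this, map_neg, hsum, neg_zero]
  have habsmem : ∀ π : Equiv.Perm (Fin n × ZMod r), π ∈ H → π * barPerm r n π ∈ H :=
    fun π hπ => H.mul_mem hπ (hbarmem π hπ)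
  -- table and degree sums as nat counts
  have htable : tableSum ↥H S = ((∑ C : ConjClasses ↥H, N (Quotient.out C) : ℕ) : ℂ) := by
    rw [tableSum]
    have : ∀ f : ↥H → ℂ, (∑ᶠ C : ConjClasses ↥H, f (Quotient.out C))
        = ∑ C : ConjClasses ↥H, f (Quotient.out C) := fun f => finsum_eq_sum_of_fintype _
    simp_rw [this]
    rw [Finset.sum_comm]
    push_cast
    exact Finset.sum_congr rfl fun C _ => hNeq _
  have hdeg : degreeSum ↥H S = (N 1 : ℂ) := hNeq 1
  have hout1 : (Quotient.out (1 : ConjClasses ↥H)) = 1 := by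
    have h1 : ConjClasses.mk (Quotient.out (1 : ConjClasses ↥H)) = ConjClasses.mk 1 := by
      rw [← ConjClasses.one_eq_mk_one, ← ConjClasses.quotient_mk_eq_mk]
      exact Quotient.out_eq _
    exact isConj_one_left.mp (ConjClasses.mk_eq_mk_iff_isConj.mp h1)
  have houtconj : ∀ g : ↥H, IsConj (Quotient.out (ConjClasses.mk g)) g := by
    intro g
    refine ConjClasses.mk_eq_mk_iff_isConj.mp ?_
    rw [← ConjClasses.quotient_mk_eq_mk]
    exact Quotient.out_eq _
  -- key equivalences
  have keysum : (∑ C : ConjClasses ↥H, N (Quotient.out C))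
      = N 1 + ∑ C ∈ Finset.univ.erase (1 : ConjClasses ↥H), N (Quotient.out C) := by
    rw [← Finset.add_sum_erase Finset.univ _ (Finset.mem_univ (1 : ConjClasses ↥H)), hout1]
  have key1 : (∀ C : ConjClasses ↥H, C ≠ 1 → N (Quotient.out C) = 0) ↔
      (∀ π : Equiv.Perm (Fin n × ZMod r), π ∈ H → π * barPerm r n π = 1) := by
    constructor
    · intro h π hπ
      set g : ↥H := ⟨π * barPerm r n π, habsmem π hπ⟩ with hg
      have hNg : N g ≠ 0 := by
        refine Nat.card_ne_zero.mpr ⟨⟨⟨π, hπ, rfl⟩⟩, inferInstance⟩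
      have : g = 1 := by
        by_contra hne
        have hC : ConjClasses.mk g ≠ 1 := by
          rw [ConjClasses.one_eq_mk_one, Ne, ConjClasses.mk_eq_mk_iff_isConj]
          intro hcj
          exact hne (isConj_one_left.mp hcj)
        exact hNg (hNconj g _ (houtconj g).symm ▸ h _ hC)
      have := congrArg (Subtype.val) this
      exact this
    · intro h C hC
      by_contra h0
      obtain ⟨⟨π, hπ, heq⟩⟩ := (Nat.card_ne_zero.mp h0).1
      have : ((Quotient.out C : ↥H) : Equiv.Perm (Fin n × ZMod r)) = ((1 : ↥H) : _) := by
        rw [← heq, h π hπ]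
        rfl
      have hgo : (Quotient.out C : ↥H) = 1 := Subtype.ext this
      apply hC
      rw [← Quotient.out_eq C, ConjClasses.quotient_mk_eq_mk, hgo, ← ConjClasses.one_eq_mk_one]
  have key2 : (∀ π : Equiv.Perm (Fin n × ZMod r), π ∈ H → π * barPerm r n π = 1) ↔
      (∀ a b : ↥H, a * b = b * a) := by
    constructor
    · intro h a b
      have heta2 : etaPerm r n * etaPerm r n = 1 := by
        apply Equiv.ext
        rintro ⟨i, k⟩
        show ((i, k).1, -(-k)) = (i, k)
        simp
      have hinv : ∀ π : Equiv.Perm (Fin n × ZMod r), π ∈ H →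
          etaPerm r n * π * etaPerm r n = π⁻¹ := fun π hπ =>
        eq_inv_of_mul_eq_one_right (h π hπ)
      have ha := hinv _ a.2
      have hb := hinv _ b.2
      have hm := hinv _ (H.mul_mem a.2 b.2)
      have hstep : etaPerm r n * ((a : Equiv.Perm (Fin n × ZMod r)) * (b : Equiv.Perm (Fin n × ZMod r))) * etaPerm r n
          = (etaPerm r n * (a : Equiv.Perm (Fin n × ZMod r)) * etaPerm r n) *
            (etaPerm r n * (b : Equiv.Perm (Fin n × ZMod r)) * etaPerm r n) := by
        have h4 : (etaPerm r n * (a : Equiv.Perm (Fin n × ZMod r)) * etaPerm r n) *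
            (etaPerm r n * (b : Equiv.Perm (Fin n × ZMod r)) * etaPerm r n)
            = etaPerm r n * (a : Equiv.Perm (Fin n × ZMod r)) * (etaPerm r n * etaPerm r n) *
              (b : Equiv.Perm (Fin n × ZMod r)) * etaPerm r n := by group
        rw [h4, heta2, mul_one]
        group
      have hkey : ((a : Equiv.Perm (Fin n × ZMod r)) * (b : Equiv.Perm (Fin n × ZMod r)))⁻¹
          = (a : Equiv.Perm (Fin n × ZMod r))⁻¹ * (b : Equiv.Perm (Fin n × ZMod r))⁻¹ := by
        rw [← hm, hstep, ha, hb]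
      have h2 : (b : Equiv.Perm (Fin n × ZMod r)) * (a : Equiv.Perm (Fin n × ZMod r))
          = (a : Equiv.Perm (Fin n × ZMod r)) * (b : Equiv.Perm (Fin n × ZMod r)) := by
        rw [mul_inv_rev] at hkey
        have h5 := congrArg Inv.inv hkey
        simpa [mul_inv_rev] using h5.symm
      exact Subtype.ext h2.symm
    · intro hab π hπ
      have hgen : π ∈ genSym r n := ((hH π).mp hπ).1
      set F : Fin n → Fin n := fun i => (π (i, 0)).1 with hF
      set Z : Fin n → ZMod r := fun i => (π (i, 0)).2 with hZ
      have hfor : ∀ i k, π (i, k) = (F i, Z i + k) := fun i k => genSym_apply hgen i k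
      have hFsurj : ∀ j : Fin n, ∃ i, F i = j := by
        intro j
        obtain ⟨⟨i, k⟩, hx⟩ := π.surjective (j, (0 : ZMod r))
        rw [hfor] at hx
        exact ⟨i, congrArg Prod.fst hx⟩
      suffices hFZ : (∀ i, F (F i) = i) ∧ (∀ i, Z (F i) = Z i) by
        apply Equiv.ext
        rintro ⟨i, k⟩
        show π (barPerm r n π (i, k)) = (i, k)
        rw [barPerm_apply hgen]
        show π (F i, k - Z i) = (i, k)
        rw [hfor, hFZ.1, hFZ.2]
        refine Prod.ext_iff.mpr ⟨rfl, ?_⟩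
        show Z i + (k - Z i) = k
        ring
      obtain h1 | h2 | h3 : n = 1 ∨ n = 2 ∨ 3 ≤ n := by omega
      · subst h1
        exact ⟨fun i => Subsingleton.elim _ _,
          fun i => congrArg Z (Subsingleton.elim _ _)⟩
      · subst h2
        have hτ : tauHat r 2 (Equiv.swap 0 1) ∈ H := by
          exact (hH _).mpr ⟨tauHat_mem_genSym r 2 _, by simp [tauHat_apply]⟩
        have hcomm := hab ⟨π, hπ⟩ ⟨_, hτ⟩
        have hcp : π * tauHat r 2 (Equiv.swap 0 1) = tauHat r 2 (Equiv.swap 0 1) * π :=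
          congrArg Subtype.val hcomm
        have hpt := DFunLike.congr_fun hcp ((0 : Fin 2), (0 : ZMod r))
        simp only [Equiv.Perm.mul_apply, tauHat_apply] at hpt
        rw [Equiv.swap_apply_left] at hpt
        rw [hfor, hfor] at hpt
        have hz10 : Z 1 = Z 0 := by
          have := congrArg Prod.snd hpt
          simpa using this
        have hzconst : ∀ j : Fin 2, Z j = Z 0 := by
          intro j
          fin_cases j
          · rfl
          · exact hz10
        exact ⟨fin2_surj_invol F hFsurj, fun i => (hzconst _).trans (hzconst i).symm⟩
      · exfalso
        set i0 : Fin n := ⟨0, by omega⟩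
        set i1 : Fin n := ⟨1, by omega⟩
        set i2 : Fin n := ⟨2, by omega⟩
        have h01 : i0 ≠ i1 := by simp [i0, i1, Fin.ext_iff]
        have h02 : i0 ≠ i2 := by simp [i0, i2, Fin.ext_iff]
        have h12 : i1 ≠ i2 := by simp [i1, i2, Fin.ext_iff]
        have hma : tauHat r n (Equiv.swap i0 i1) ∈ H := by
          exact (hH _).mpr ⟨tauHat_mem_genSym r n _, by simp [tauHat_apply]⟩
        have hmb : tauHat r n (Equiv.swap i0 i2) ∈ H := by
          exact (hH _).mpr ⟨tauHat_mem_genSym r n _, by simp [tauHat_apply]⟩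
        have hcomm := hab ⟨_, hma⟩ ⟨_, hmb⟩
        have hcp : tauHat r n (Equiv.swap i0 i1) * tauHat r n (Equiv.swap i0 i2)
            = tauHat r n (Equiv.swap i0 i2) * tauHat r n (Equiv.swap i0 i1) :=
          congrArg Subtype.val hcomm
        have hpt := DFunLike.congr_fun hcp (i0, (0 : ZMod r))
        simp only [Equiv.Perm.mul_apply, tauHat_apply] at hpt
        rw [Equiv.swap_apply_left, Equiv.swap_apply_left,
          Equiv.swap_apply_of_ne_of_ne h02.symm h12.symm,
          Equiv.swap_apply_of_ne_of_ne h01.symm h12] at hpt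
        exact h12 (congrArg Prod.fst hpt).symm
  constructor
  · rw [htable, hdeg]
    refine Nat.cast_le.mpr ?_
    calc N 1 = N (Quotient.out (1 : ConjClasses ↥H)) := by rw [hout1]
    _ ≤ _ := Finset.single_le_sum (f := fun C : ConjClasses ↥H => N (Quotient.out C))
      (fun C _ => Nat.zero_le _) (Finset.mem_univ (1 : ConjClasses ↥H))
  · rw [htable, hdeg, Nat.cast_inj, keysum]
    rw [← key2, ← key1]
    constructor
    · intro h C hC
      have hz : ∑ C ∈ Finset.univ.erase (1 : ConjClasses ↥H), N (Quotient.out C) = 0 := by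
        omega
      exact (Finset.sum_eq_zero_iff.mp hz) C (Finset.mem_erase.mpr ⟨hC, Finset.mem_univ _⟩)
    · intro h
      have hz : ∑ C ∈ Finset.univ.erase (1 : ConjClasses ↥H), N (Quotient.out C) = 0 :=
        Finset.sum_eq_zero fun C hC => h C (Finset.mem_erase.mp hC).1
      omega
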